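/- Let A be an m×n real matrix, b ∈ ℝ^m, Φ(x) = (1/2)‖Ax − b‖₂², and let L be a Lipschitz constant of ∇Φ. Let γ > 0 and β > 2L, suppose some component of Aᵀb is strictly positive, and let (x^k, y^k, z^k) be an ADMM_p sequence with X = {x ∈ ℝ^n : xᵢ ≥ 0 for all i} such that {x^k} is bounded, so that x^k converges to some x^∞ ∈ X with x^∞ ≠ 0. Write Λ = supp(x^∞) = {i : x^∞ᵢ ≠ 0}, q^∞ = Aᵀ(Ax^∞ − b), a = ‖x^∞‖₁, r = ‖x^∞‖₂. Assume the nondegeneracy condition: γ·(1/r − (a/r³)·x^∞ᵢ) + q^∞ᵢ = 0 for every i ∈ Λ, and q^∞ᵢ + γ/r > 0 for every i ∉ Λ. Then there exists K such that supp(x^k) = Λ for all k ≥ K. -/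

import Mathlib

noncomputable section
open Classical

/-- The ℓ¹ norm on ℝ^n. -/
def l1 {n : ℕ} (x : EuclideanSpace ℝ (Fin n)) : ℝ := ∑ i, |x i|

/-- The ratio ‖x‖₁/‖x‖₂ with the convention that it equals 1 at the origin. -/
def ratio {n : ℕ} (x : EuclideanSpace ℝ (Fin n)) : ℝ :=
  if x = 0 then 1 else l1 x / ‖x‖

/-- `(x, y, z)` is an ADMM_p sequence for data `(β, γ, X, Φ)`:
at every step, `x^{k+1}` globally minimizes the proximal subproblem of the ratio `‖·‖₁/‖·‖₂`
over `X`, `y^{k+1}` globally minimizes the `Φ`-subproblem, and `z` is updated by the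
multiplier rule. -/
def ADMMpSeq {n : ℕ} (β γ : ℝ) (X : Set (EuclideanSpace ℝ (Fin n)))
    (Φ : EuclideanSpace ℝ (Fin n) → ℝ)
    (x y z : ℕ → EuclideanSpace ℝ (Fin n)) : Prop :=
  ∀ k : ℕ,
    (x (k + 1) ∈ X ∧ ∀ u ∈ X,
      ratio (x (k + 1)) + β / (2 * γ) * ‖x (k + 1) - (y k - β⁻¹ • z k)‖ ^ 2 ≤
        ratio u + β / (2 * γ) * ‖u - (y k - β⁻¹ • z k)‖ ^ 2) ∧
    (∀ u : EuclideanSpace ℝ (Fin n),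
      Φ (y (k + 1)) + β / 2 * ‖y (k + 1) - x (k + 1) - β⁻¹ • z k‖ ^ 2 ≤
        Φ u + β / 2 * ‖u - x (k + 1) - β⁻¹ • z k‖ ^ 2) ∧
    z (k + 1) = z k + β • (x (k + 1) - y (k + 1))


/-- Matrix–vector multiplication as a map between Euclidean spaces. -/
def mv {m n : ℕ} (A : Matrix (Fin m) (Fin n) ℝ) (x : EuclideanSpace ℝ (Fin n)) :
    EuclideanSpace ℝ (Fin m) :=
  (WithLp.equiv 2 (Fin m → ℝ)).symm (A.mulVec (WithLp.equiv 2 (Fin n → ℝ) x))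

open Filter

section Aux

lemma mv_apply {m n : ℕ} (A : Matrix (Fin m) (Fin n) ℝ) (x : EuclideanSpace ℝ (Fin n)) (i : Fin m) :
    mv A x i = ∑ j, A i j * x j := rfl

lemma mv_sub {m n : ℕ} (A : Matrix (Fin m) (Fin n) ℝ) (u v : EuclideanSpace ℝ (Fin n)) :
    mv A (u - v) = mv A u - mv A v := by
  ext i; simp [mv_apply, mul_sub, Finset.sum_sub_distrib]

lemma mv_smul {m n : ℕ} (A : Matrix (Fin m) (Fin n) ℝ) (c : ℝ) (u : EuclideanSpace ℝ (Fin n)) :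
    mv A (c • u) = c • mv A u := by
  ext i; simp [mv_apply, Finset.mul_sum]
  exact Finset.sum_congr rfl (fun j _ => by ring)

lemma mv_zero {m n : ℕ} (A : Matrix (Fin m) (Fin n) ℝ) : mv A 0 = 0 := by
  ext i; simp [mv_apply]

lemma inner_mv {m n : ℕ} (A : Matrix (Fin m) (Fin n) ℝ) (u : EuclideanSpace ℝ (Fin n))
    (w : EuclideanSpace ℝ (Fin m)) :
    inner ℝ (mv A u) w = (inner ℝ u (mv A.transpose w) : ℝ) := by
  simp only [PiLp.inner_apply, RCLike.inner_apply, starRingEnd_apply, star_trivial, mv_apply]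
  simp_rw [Finset.sum_mul]
  rw [Finset.sum_comm]
  congr 1; ext j; rw [Finset.mul_sum]; congr 1; ext i
  simp [Matrix.transpose]; ring

lemma enorm_sq {n : ℕ} (w : EuclideanSpace ℝ (Fin n)) : ‖w‖^2 = ∑ i, w i ^ 2 := by
  rw [EuclideanSpace.norm_eq, Real.sq_sqrt (by positivity)]
  simp [Real.norm_eq_abs, sq_abs]

lemma expand_sq {n : ℕ} (a c : EuclideanSpace ℝ (Fin n)) (t : ℝ) :
    ‖a - t • c‖^2 = ‖a‖^2 - 2*t*(inner ℝ a c : ℝ) + t^2*‖c‖^2 := by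
  rw [norm_sub_sq_real, real_inner_smul_right, norm_smul]
  simp [mul_pow, sq_abs]
  ring

lemma stationarity {m n : ℕ} (A : Matrix (Fin m) (Fin n) ℝ) (b : EuclideanSpace ℝ (Fin m))
    (β : ℝ) (hβ : 0 < β) (p w : EuclideanSpace ℝ (Fin n))
    (hmin : ∀ u, 1/2*‖mv A p - b‖^2 + β/2*‖p - w‖^2 ≤ 1/2*‖mv A u - b‖^2 + β/2*‖u - w‖^2) :
    mv A.transpose (mv A p - b) + β • (p - w) = 0 := by
  set g := mv A.transpose (mv A p - b) + β • (p - w) with hgdef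
  by_contra hne
  have hgpos : 0 < ‖g‖ := norm_pos_iff.mpr hne
  obtain ⟨C, hC⟩ : ∃ C : ℝ, C = 1/2*‖mv A g‖^2 + β/2*‖g‖^2 := ⟨_, rfl⟩
  have hCpos : 0 < C := by
    have h1 : 0 < β/2*‖g‖^2 := by positivity
    have h2 : (0:ℝ) ≤ 1/2*‖mv A g‖^2 := by positivity
    linarith [hC]
  obtain ⟨t, htdef⟩ : ∃ t : ℝ, t = ‖g‖^2/(2*C) := ⟨_, rfl⟩
  have htpos : 0 < t := by rw [htdef]; positivity
  have h := hmin (p - t • g)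
  have e1 : mv A (p - t • g) - b = (mv A p - b) - t • (mv A g) := by
    rw [mv_sub, mv_smul]; abel
  have e2 : (p - t • g) - w = (p - w) - t • g := by abel
  rw [e1, e2, expand_sq, expand_sq] at h
  have hX : (inner ℝ (mv A p - b) (mv A g) : ℝ) + β * (inner ℝ (p - w) g : ℝ) = ‖g‖^2 := by
    have i1 : (inner ℝ (mv A p - b) (mv A g) : ℝ) = inner ℝ g (mv A.transpose (mv A p - b)) := by
      rw [real_inner_comm, inner_mv]
    have i2 : (inner ℝ (p - w) g : ℝ) = inner ℝ g (p - w) := real_inner_comm _ _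
    rw [i1, i2, ← real_inner_smul_right, ← inner_add_right, ← hgdef,
      real_inner_self_eq_norm_sq]
  have htC : t * C = ‖g‖^2/2 := by
    rw [htdef]; field_simp
  have hXt : t * ((inner ℝ (mv A p - b) (mv A g) : ℝ) + β * (inner ℝ (p - w) g : ℝ)) = t * ‖g‖^2 := by
    rw [hX]
  have hC2 : t^2 * C = t^2*(1/2*‖mv A g‖^2) + t^2*(β/2*‖g‖^2) := by rw [hC]; ring
  have ht2' : t^2 * C = t * (‖g‖^2/2) := by rw [pow_two, mul_assoc, htC]
  have hpos : 0 < t * ‖g‖^2 := by positivity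
  nlinarith [h, hXt, hC2, ht2', hpos]

lemma key_scalar (a1 ε t s V c : ℝ) (ha1 : 0 ≤ a1) (hε : 0 < ε) (ht : 0 < t) (hs : 0 < s)
    (hst : s^2 = t^2 + ε^2) (hc : 0 < c)
    (hineq : (a1 + ε)/s + c*(ε^2 - 2*ε*V) ≤ a1/t) :
    1/s ≤ a1*ε/(2*s*t^2) + 2*c*V := by
  have hts : t ≤ s := by nlinarith
  have hstb : (s - t) * (2*t) ≤ ε^2 := by nlinarith [sq_nonneg (s - t)]
  have h3 : (a1 + ε)*t + c*(ε^2 - 2*ε*V)*(s*t) ≤ a1*s := by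
    have h := mul_le_mul_of_nonneg_right hineq (mul_pos hs ht).le
    have e1 : ((a1+ε)/s + c*(ε^2 - 2*ε*V)) * (s*t) = (a1+ε)*t + c*(ε^2-2*ε*V)*(s*t) := by
      field_simp
    have e2 : a1/t * (s*t) = a1*s := by field_simp
    rw [e1, e2] at h; exact h
  have h3' := mul_le_mul_of_nonneg_right h3 (by positivity : (0:ℝ) ≤ 2*t)
  have hA := mul_le_mul_of_nonneg_left hstb ha1
  have hB : (0:ℝ) ≤ c*ε^2*s*t^2 := by positivity
  have step1 : ε*(2*t^2) ≤ ε*(a1*ε + 4*c*V*s*t^2) := by nlinarith [h3', hA, hB]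
  have hnum' : 2*t^2 ≤ a1*ε + 4*c*V*s*t^2 := le_of_mul_le_mul_left step1 hε
  have hgt : (0:ℝ) < 2*s*t^2 := by positivity
  have expand : a1*ε/(2*s*t^2) + 2*c*V - 1/s = (a1*ε + 4*c*V*s*t^2 - 2*t^2)/(2*s*t^2) := by
    field_simp; ring
  have := div_nonneg (by linarith : (0:ℝ) ≤ a1*ε + 4*c*V*s*t^2 - 2*t^2) hgt.le
  linarith [expand ▸ this]

lemma rec_tendsto (a b : ℕ → ℝ) (ha : ∀ k, 0 ≤ a k)
    (hrec : ∀ k, a (k+1) ≤ a k / 2 + b k)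
    (hb : Tendsto b atTop (nhds 0)) :
    Tendsto a atTop (nhds 0) := by
  rw [Metric.tendsto_atTop] at hb ⊢
  intro ε hε
  obtain ⟨N₀, hN₀⟩ := hb (ε/4) (by linarith)
  have hb' : ∀ k, N₀ ≤ k → b k < ε/4 := by
    intro k hk
    have := hN₀ k hk
    rw [Real.dist_eq, sub_zero] at this
    exact lt_of_abs_lt this
  have key : ∀ j, a (N₀ + j) ≤ a N₀ / 2^j + ε/2 := by
    intro j; induction j with
    | zero =>
      simp only [Nat.add_zero, pow_zero, div_one]
      linarith [hε]
    | succ j ih =>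
      have h1 := hrec (N₀ + j)
      have h2 : b (N₀ + j) < ε/4 := hb' _ (Nat.le_add_right _ _)
      have heq : N₀ + (j+1) = (N₀ + j) + 1 := rfl
      rw [heq]
      calc a ((N₀+j)+1) ≤ a (N₀+j)/2 + b (N₀+j) := h1
        _ ≤ (a N₀/2^j + ε/2)/2 + ε/4 := by linarith
        _ = a N₀/2^(j+1) + ε/2 := by ring
  obtain ⟨j₀, hj₀⟩ : ∃ j₀ : ℕ, a N₀ < ε/4 * 2^j₀ := by
    obtain ⟨j₀, hj₀⟩ := pow_unbounded_of_one_lt (a N₀ / (ε/4)) (one_lt_two (α := ℝ))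
    exact ⟨j₀, by rw [div_lt_iff₀ (by linarith)] at hj₀; linarith [hj₀]⟩
  refine ⟨N₀ + j₀, fun k hk => ?_⟩
  rw [Real.dist_eq, sub_zero, abs_of_nonneg (ha k)]
  have hk' : N₀ + (k - N₀) = k := by omega
  have h1 := key (k - N₀)
  rw [hk'] at h1
  have h2 : (2:ℝ)^j₀ ≤ 2^(k-N₀) := pow_le_pow_right₀ one_le_two (by omega)
  have h4 : a N₀/2^(k-N₀) ≤ a N₀/2^j₀ := by
    gcongr
    exact ha N₀
  have h5 : a N₀/2^j₀ < ε/4 := by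
    rw [div_lt_iff₀ (by positivity)]; linarith
  linarith

lemma coord_abs_le {n : ℕ} (u : EuclideanSpace ℝ (Fin n)) (i : Fin n) : |u i| ≤ ‖u‖ := by
  have h : u i ^2 ≤ ‖u‖^2 := by
    rw [enorm_sq]
    exact Finset.single_le_sum (fun j _ => sq_nonneg (u j)) (Finset.mem_univ i)
  calc |u i| = Real.sqrt (u i^2) := (Real.sqrt_sq_eq_abs _).symm
    _ ≤ Real.sqrt (‖u‖^2) := Real.sqrt_le_sqrt h
    _ = ‖u‖ := Real.sqrt_sq (norm_nonneg u)

lemma coord_tendsto {n : ℕ} (f : ℕ → EuclideanSpace ℝ (Fin n)) (w : EuclideanSpace ℝ (Fin n))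
    (i : Fin n) (hf : Tendsto f atTop (nhds w)) :
    Tendsto (fun k => f k i) atTop (nhds (w i)) := by
  rw [tendsto_iff_norm_sub_tendsto_zero] at hf ⊢
  apply squeeze_zero (fun k => norm_nonneg _) (fun k => ?_) hf
  have : f k i - w i = (f k - w) i := rfl
  rw [Real.norm_eq_abs, this]
  exact coord_abs_le _ _

lemma l1_tendsto {n : ℕ} (f : ℕ → EuclideanSpace ℝ (Fin n)) (w : EuclideanSpace ℝ (Fin n))
    (hf : Tendsto f atTop (nhds w)) :
    Tendsto (fun k => l1 (f k)) atTop (nhds (l1 w)) := by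
  unfold l1
  exact tendsto_finset_sum _ (fun i _ => (coord_tendsto f w i hf).abs)

lemma l1_nonneg {n : ℕ} (w : EuclideanSpace ℝ (Fin n)) : 0 ≤ l1 w :=
  Finset.sum_nonneg (fun i _ => abs_nonneg _)

lemma psd_norm {m n : ℕ} (A : Matrix (Fin m) (Fin n) ℝ) (β : ℝ) (hβ : 0 < β)
    (u : EuclideanSpace ℝ (Fin n)) :
    β * ‖u‖ ≤ ‖mv A.transpose (mv A u) + β • u‖ := by
  rcases eq_or_ne u 0 with rfl|hu
  · simp
  · have hupos : 0 < ‖u‖ := norm_pos_iff.mpr hu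
    have h1 : (0:ℝ) ≤ inner ℝ (mv A.transpose (mv A u)) u := by
      rw [real_inner_comm, ← inner_mv]
      exact real_inner_self_nonneg
    have h2 : β*‖u‖^2 ≤ (inner ℝ (mv A.transpose (mv A u) + β • u) u : ℝ) := by
      rw [inner_add_left, real_inner_smul_left, real_inner_self_eq_norm_sq]
      nlinarith [h1]
    have h3 := real_inner_le_norm (mv A.transpose (mv A u) + β • u) u
    have := le_trans h2 h3
    calc β * ‖u‖ = β*‖u‖^2/‖u‖ := by field_simp
      _ ≤ ‖mv A.transpose (mv A u) + β • u‖*‖u‖/‖u‖ := by gcongr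
      _ = ‖mv A.transpose (mv A u) + β • u‖ := by field_simp

end Aux

set_option maxHeartbeats 2000000 in
theorem stmt17 {m n : ℕ} (A : Matrix (Fin m) (Fin n) ℝ) (b : EuclideanSpace ℝ (Fin m))
    (Φ : EuclideanSpace ℝ (Fin n) → ℝ)
    (hΦ : Φ = fun x => 1 / 2 * ‖mv A x - b‖ ^ 2)
    (L : ℝ)
    (hL : ∀ x y : EuclideanSpace ℝ (Fin n),
      ‖mv A.transpose (mv A x - b) - mv A.transpose (mv A y - b)‖ ≤ L * ‖x - y‖)
    (γ β : ℝ) (hγ : 0 < γ) (hβ : 2 * L < β)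
    (hAb : ∃ i, 0 < mv A.transpose b i)
    (X : Set (EuclideanSpace ℝ (Fin n)))
    (hX : X = {v : EuclideanSpace ℝ (Fin n) | ∀ i, 0 ≤ v i})
    (x y z : ℕ → EuclideanSpace ℝ (Fin n))
    (hADMM : ADMMpSeq β γ X Φ x y z)
    (hbdd : ∃ C : ℝ, ∀ k, ‖x k‖ ≤ C)
    (xinf : EuclideanSpace ℝ (Fin n))
    (hconv : Filter.Tendsto x Filter.atTop (nhds xinf))
    (hxX : xinf ∈ X) (hxinf : xinf ≠ 0)
    (qinf : EuclideanSpace ℝ (Fin n)) (hq : qinf = mv A.transpose (mv A xinf - b))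
    (hnd1 : ∀ i, xinf i ≠ 0 →
      γ * (1 / ‖xinf‖ - l1 xinf / ‖xinf‖ ^ 3 * xinf i) + qinf i = 0)
    (hnd2 : ∀ i, xinf i = 0 → 0 < qinf i + γ / ‖xinf‖) :
    ∃ K : ℕ, ∀ k ≥ K, ∀ i, x k i ≠ 0 ↔ xinf i ≠ 0 := by
  classical
  -- basic positivity
  have hn : 0 < n := by
    rcases Nat.eq_zero_or_pos n with h|h
    · exfalso; apply hxinf; subst h; ext i; exact i.elim0
    · exact h
  have hL0 : 0 ≤ L := by
    have h := hL (EuclideanSpace.single (⟨0, hn⟩ : Fin n) (1:ℝ)) 0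
    have hnorm : ‖(EuclideanSpace.single (⟨0, hn⟩ : Fin n) (1:ℝ))
        - (0 : EuclideanSpace ℝ (Fin n))‖ = 1 := by
      rw [sub_zero, EuclideanSpace.norm_single]; norm_num
    rw [hnorm, mul_one] at h
    exact le_trans (norm_nonneg _) h
  have hβ0 : 0 < β := by linarith
  have hβne : (β:ℝ) ≠ 0 := ne_of_gt hβ0
  set S : EuclideanSpace ℝ (Fin n) → EuclideanSpace ℝ (Fin n) :=
    fun v => mv A.transpose (mv A v) with hS
  have hSsub : ∀ u v, S (u - v) = S u - S v := by
    intro u v; rw [hS]; simp only; rw [mv_sub, mv_sub]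
  have hSlip : ∀ v, ‖S v‖ ≤ L * ‖v‖ := by
    intro v
    have h := hL v 0
    have e0 : (mv A v - b) - (mv A 0 - b) = mv A v := by rw [mv_zero]; abel
    have e : mv A.transpose (mv A v - b) - mv A.transpose (mv A 0 - b) = S v := by
      rw [← mv_sub, e0]
    rw [e, sub_zero] at h
    exact h
  -- stationarity for the y-subproblem
  have E1 : ∀ k, mv A.transpose (mv A (y (k+1)) - b)
      + β • (y (k+1) - (x (k+1) + β⁻¹ • z k)) = 0 := by
    intro k
    apply stationarity A b β hβ0
    intro u
    have h := (hADMM k).2.1 u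
    rw [hΦ] at h
    simpa [sub_sub] using h
  have E2 : ∀ k, z (k+1) = mv A.transpose (mv A (y (k+1)) - b) := by
    intro k
    have h := E1 k
    have hz := (hADMM k).2.2
    have h' : mv A.transpose (mv A (y (k+1)) - b)
        = - (β • (y (k+1) - (x (k+1) + β⁻¹ • z k))) :=
      eq_neg_of_add_eq_zero_left h
    have hsm : β • (y (k+1) - (x (k+1) + β⁻¹ • z k))
        = β • y (k+1) - β • x (k+1) - z k := by
      rw [smul_sub, smul_add, smul_smul, mul_inv_cancel₀ hβne, one_smul]
      abel
    rw [hz, h', hsm, smul_sub]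
    abel
  -- the recursion
  have R : ∀ k, S (y (k+2)) + β • (y (k+2)) = β • (x (k+2)) + S (y (k+1)) := by
    intro k
    have h := E1 (k+1)
    have eS : ∀ v : EuclideanSpace ℝ (Fin n),
        mv A.transpose (mv A v - b) = S v - mv A.transpose b := by
      intro v; rw [mv_sub]
    rw [E2 k, eS, eS] at h
    have hx : β • (β⁻¹ • (S (y (k+1)) - mv A.transpose b))
        = S (y (k+1)) - mv A.transpose b := by
      rw [smul_smul, mul_inv_cancel₀ hβne, one_smul]
    rw [smul_sub, smul_add, hx] at h
    rw [← sub_eq_zero]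
    rw [show (0:EuclideanSpace ℝ (Fin n)) = S (y (k+1+1)) - mv A.transpose b +
      (β • y (k+1+1) - (β • x (k+1+1) + (S (y (k+1)) - mv A.transpose b))) from h.symm]
    abel
  -- y converges to xinf
  have hxconv2 : Tendsto (fun k => x (k+2)) atTop (nhds xinf) :=
    hconv.comp (tendsto_add_atTop_nat 2)
  have hd : Tendsto (fun k => ‖x (k+2) - xinf‖) atTop (nhds 0) :=
    tendsto_iff_norm_sub_tendsto_zero.mp hxconv2
  have hrec : ∀ k, ‖y (k+2) - xinf‖ ≤ ‖y (k+1) - xinf‖ / 2 + ‖x (k+2) - xinf‖ := by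
    intro k
    have hzero : S (y (k+2)) + β • y (k+2) - (β • x (k+2) + S (y (k+1)))
        = (0 : EuclideanSpace ℝ (Fin n)) := sub_eq_zero.mpr (R k)
    have hid : S (y (k+2) - xinf) + β • (y (k+2) - xinf)
        = S (y (k+1) - xinf) + β • (x (k+2) - xinf) := by
      rw [hSsub, hSsub, smul_sub, smul_sub, ← sub_eq_zero]
      rw [show (0:EuclideanSpace ℝ (Fin n)) = S (y (k+2)) + β • y (k+2)
          - (β • x (k+2) + S (y (k+1))) from hzero.symm]
      abel
    have h1 := psd_norm A β hβ0 (y (k+2) - xinf)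
    rw [hid] at h1
    have h2 : ‖S (y (k+1) - xinf) + β • (x (k+2) - xinf)‖
        ≤ L*‖y (k+1) - xinf‖ + β*‖x (k+2) - xinf‖ := by
      calc ‖S (y (k+1) - xinf) + β • (x (k+2) - xinf)‖
          ≤ ‖S (y (k+1) - xinf)‖ + ‖β • (x (k+2) - xinf)‖ := norm_add_le _ _
        _ ≤ L*‖y (k+1) - xinf‖ + β*‖x (k+2) - xinf‖ := by
            have := hSlip (y (k+1) - xinf)
            rw [norm_smul, Real.norm_eq_abs, abs_of_pos hβ0]
            linarith
    have hL2 : L * ‖y (k+1) - xinf‖ ≤ β/2 * ‖y (k+1) - xinf‖ :=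
      mul_le_mul_of_nonneg_right (by linarith) (norm_nonneg _)
    have h3 : β * ‖y (k+2) - xinf‖ ≤ β/2 * ‖y (k+1) - xinf‖ + β * ‖x (k+2) - xinf‖ := by
      linarith
    have h4 : β * ‖y (k+2) - xinf‖ ≤ β * (‖y (k+1) - xinf‖/2 + ‖x (k+2) - xinf‖) := by
      linarith [h3]
    exact le_of_mul_le_mul_left (by linarith [h4]) hβ0
  have hyconv1 : Tendsto (fun k => ‖y (k+1) - xinf‖) atTop (nhds 0) :=
    rec_tendsto (fun k => ‖y (k+1) - xinf‖) (fun k => ‖x (k+2) - xinf‖)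
      (fun k => norm_nonneg _) hrec hd
  have hyconv : Tendsto y atTop (nhds xinf) := by
    have h : Tendsto (fun k => y (k+1)) atTop (nhds xinf) :=
      tendsto_iff_norm_sub_tendsto_zero.mpr hyconv1
    exact (tendsto_add_atTop_iff_nat 1).mp h
  have hSy : Tendsto (fun k => S (y (k+1))) atTop (nhds (S xinf)) := by
    rw [tendsto_iff_norm_sub_tendsto_zero]
    have hbnd : Tendsto (fun k => L * ‖y (k+1) - xinf‖) atTop (nhds 0) := by
      simpa using hyconv1.const_mul L
    apply squeeze_zero (fun k => norm_nonneg _) (fun k => ?_) hbnd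
    rw [← hSsub]
    exact hSlip _
  have hzconv : Tendsto z atTop (nhds qinf) := by
    have hz1 : ∀ k, z (k+1) = S (y (k+1)) - mv A.transpose b := by
      intro k; rw [E2 k, mv_sub]
    have hq' : qinf = S xinf - mv A.transpose b := by rw [hq, mv_sub]
    have h : Tendsto (fun k => z (k+1)) atTop (nhds qinf) := by
      simp only [hz1, hq']
      exact hSy.sub tendsto_const_nhds
    exact (tendsto_add_atTop_iff_nat 1).mp h
  have hvconv : Tendsto (fun k => y k - β⁻¹ • z k) atTop (nhds (xinf - β⁻¹ • qinf)) :=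
    hyconv.sub (hzconv.const_smul β⁻¹)
  have hr : 0 < ‖xinf‖ := norm_pos_iff.mpr hxinf
  -- per-coordinate eventual identification
  have main : ∀ i, ∀ᶠ k in atTop, (x k i ≠ 0 ↔ xinf i ≠ 0) := by
    intro i
    by_cases hi : xinf i = 0
    · -- hard case
      suffices hsuff : ∀ᶠ k in atTop, x k i = 0 by
        exact hsuff.mono (fun k hk => by simp [hk, hi])
      by_contra hcon
      have hfreq0 : ∃ᶠ k in atTop, x k i ≠ 0 := Filter.not_eventually.mp hcon
      have hfreq : ∃ᶠ j in atTop, x (j+1) i ≠ 0 := by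
        rw [Filter.frequently_atTop] at hfreq0 ⊢
        intro N
        obtain ⟨k, hk1, hk2⟩ := hfreq0 (N+1)
        refine ⟨k-1, by omega, ?_⟩
        have hke : k-1+1 = k := by omega
        rw [hke]; exact hk2
      obtain ⟨c, hc⟩ : ∃ c : ℝ, c = β/(2*γ) := ⟨_, rfl⟩
      have hcpos : 0 < c := by rw [hc]; positivity
      set D : ℕ → ℝ := fun j =>
        (l1 (x (j+1)) - |x (j+1) i|) * (x (j+1) i)
          / (2*‖x (j+1)‖*(Real.sqrt (‖x (j+1)‖^2 - (x (j+1) i)^2))^2)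
        + 2*c*((y j - β⁻¹ • z j) i) - 1/‖x (j+1)‖ with hD
      have hpconv : Tendsto (fun j => x (j+1)) atTop (nhds xinf) :=
        hconv.comp (tendsto_add_atTop_nat 1)
      have hεconv : Tendsto (fun j => x (j+1) i) atTop (nhds 0) := by
        have := coord_tendsto _ xinf i hpconv
        rwa [hi] at this
      have hsconv : Tendsto (fun j => ‖x (j+1)‖) atTop (nhds ‖xinf‖) := hpconv.norm
      have htconv : Tendsto (fun j => Real.sqrt (‖x (j+1)‖^2 - (x (j+1) i)^2)) atTop
          (nhds ‖xinf‖) := by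
        have h1 : Tendsto (fun j => ‖x (j+1)‖^2 - (x (j+1) i)^2) atTop
            (nhds (‖xinf‖^2 - 0^2)) := (hsconv.pow 2).sub (hεconv.pow 2)
        have h2 := h1.sqrt
        simpa [Real.sqrt_sq hr.le] using h2
      have ha1conv : Tendsto (fun j => l1 (x (j+1)) - |x (j+1) i|) atTop
          (nhds (l1 xinf)) := by
        have h1 := l1_tendsto _ xinf hpconv
        have h2 := hεconv.abs
        simpa using h1.sub h2
      have hVconv : Tendsto (fun j => (y j - β⁻¹ • z j) i) atTop
          (nhds (-(qinf i)/β)) := by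
        have h := coord_tendsto _ _ i hvconv
        have he : (xinf - β⁻¹ • qinf) i = -(qinf i)/β := by
          show xinf i - β⁻¹ * qinf i = -(qinf i)/β
          rw [hi]; field_simp; ring
        rwa [he] at h
      have hDconv : Tendsto D atTop (nhds (2*c*(-(qinf i)/β) - 1/‖xinf‖)) := by
        rw [hD]
        have hnum : Tendsto (fun j => (l1 (x (j+1)) - |x (j+1) i|) * (x (j+1) i)) atTop
            (nhds (l1 xinf * 0)) := ha1conv.mul hεconv
        have hden : Tendsto (fun j =>
            2*‖x (j+1)‖*(Real.sqrt (‖x (j+1)‖^2 - (x (j+1) i)^2))^2) atTop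
            (nhds (2*‖xinf‖*‖xinf‖^2)) :=
          (tendsto_const_nhds.mul hsconv).mul (htconv.pow 2)
        have hfrac := hnum.div hden (by positivity : (2*‖xinf‖*‖xinf‖^2) ≠ 0)
        have h2cV : Tendsto (fun j => 2*c*((y j - β⁻¹ • z j) i)) atTop
            (nhds (2*c*(-(qinf i)/β))) := tendsto_const_nhds.mul hVconv
        have hinv : Tendsto (fun j => 1/‖x (j+1)‖) atTop (nhds (1/‖xinf‖)) :=
          tendsto_const_nhds.div hsconv hr.ne'
        have := (hfrac.add h2cV).sub hinv
        simpa using this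
      have hDneg : 2*c*(-(qinf i)/β) - 1/‖xinf‖ < 0 := by
        have hθ := hnd2 i hi
        have e1 : 2*c*(-(qinf i)/β) = -(qinf i)/γ := by rw [hc]; field_simp
        rw [e1]
        have e2 : (qinf i + γ/‖xinf‖)/γ = qinf i/γ + 1/‖xinf‖ := by
          rw [add_div]
          congr 1
          rw [div_div, mul_comm, ← div_div, div_self (ne_of_gt hγ)]
        have h3 : 0 < (qinf i + γ/‖xinf‖)/γ := div_pos hθ hγ
        rw [e2] at h3
        have h4 : -(qinf i)/γ = -(qinf i/γ) := by ring
        rw [h4]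
        linarith
      have hlt : ∀ᶠ j in atTop, D j < 0 := hDconv.eventually_lt_const hDneg
      have hclose : ∀ᶠ j in atTop, ‖x (j+1) - xinf‖ < ‖xinf‖/4 := by
        have h := tendsto_iff_norm_sub_tendsto_zero.mp hpconv
        exact h.eventually_lt_const (by positivity)
      have hgood : ∀ᶠ j in atTop, (x (j+1) i ≠ 0 → 0 ≤ D j) := by
        filter_upwards [hclose] with j hj hne0
        have hPX : x (j+1) ∈ X := (hADMM j).1.1
        have hPi0 : 0 ≤ x (j+1) i := by rw [hX] at hPX; exact hPX i
        have hεpos : 0 < x (j+1) i := lt_of_le_of_ne hPi0 (Ne.symm hne0)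
        have hεabs : |x (j+1) i| ≤ ‖x (j+1) - xinf‖ := by
          have h := coord_abs_le (x (j+1) - xinf) i
          have e : (x (j+1) - xinf) i = x (j+1) i := by
            show x (j+1) i - xinf i = x (j+1) i
            rw [hi, sub_zero]
          rwa [e] at h
        have hεlt : x (j+1) i < ‖xinf‖/4 := by
          rw [abs_of_pos hεpos] at hεabs; linarith
        have hslb : 3*‖xinf‖/4 ≤ ‖x (j+1)‖ := by
          have h := norm_sub_norm_le xinf (x (j+1))
          rw [norm_sub_rev] at h
          linarith [hj]
        have hspos : 0 < ‖x (j+1)‖ := by linarith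
        obtain ⟨u, hu⟩ : ∃ u : EuclideanSpace ℝ (Fin n),
            u = x (j+1) - (x (j+1) i) • EuclideanSpace.single i (1:ℝ) := ⟨_, rfl⟩
        have hui : u i = 0 := by
          rw [hu]
          show x (j+1) i - (x (j+1) i) * (EuclideanSpace.single i (1:ℝ)) i = 0
          rw [EuclideanSpace.single_apply, if_pos rfl]
          ring
        have huj : ∀ j', j' ≠ i → u j' = x (j+1) j' := by
          intro j' hj'
          rw [hu]
          show x (j+1) j' - (x (j+1) i) * (EuclideanSpace.single i (1:ℝ)) j' = _
          rw [EuclideanSpace.single_apply, if_neg hj']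
          ring
        have huX : u ∈ X := by
          rw [hX]; intro j'
          by_cases h : j' = i
          · rw [h, hui]
          · rw [huj j' h]; rw [hX] at hPX; exact hPX j'
        have hsq : ‖x (j+1)‖^2 = ‖u‖^2 + (x (j+1) i)^2 := by
          rw [enorm_sq, enorm_sq]
          rw [← Finset.add_sum_erase Finset.univ (fun j' => x (j+1) j' ^ 2) (Finset.mem_univ i),
              ← Finset.add_sum_erase Finset.univ (fun j' => u j' ^ 2) (Finset.mem_univ i)]
          have he : ∑ j' ∈ Finset.univ.erase i, u j' ^ 2
              = ∑ j' ∈ Finset.univ.erase i, x (j+1) j' ^ 2 :=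
            Finset.sum_congr rfl (fun j' hj' => by
              rw [huj j' (Finset.ne_of_mem_erase hj')])
          rw [he, hui]; ring
        have hl1d : l1 (x (j+1)) = l1 u + x (j+1) i := by
          unfold l1
          rw [← Finset.add_sum_erase Finset.univ (fun j' => |x (j+1) j'|) (Finset.mem_univ i),
              ← Finset.add_sum_erase Finset.univ (fun j' => |u j'|) (Finset.mem_univ i)]
          have he : ∑ j' ∈ Finset.univ.erase i, |u j'|
              = ∑ j' ∈ Finset.univ.erase i, |x (j+1) j'| :=
            Finset.sum_congr rfl (fun j' hj' => by
              rw [huj j' (Finset.ne_of_mem_erase hj')])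
          rw [he, hui, abs_zero, abs_of_pos hεpos]; ring
        have hu2pos : 0 < ‖u‖^2 := by
          nlinarith [hsq, hslb, hεlt, hεpos, hr]
        have htpos : 0 < ‖u‖ := by
          rcases (norm_nonneg u).lt_or_eq with h|h
          · exact h
          · exfalso; rw [← h] at hu2pos; simp at hu2pos
        have hune : u ≠ 0 := norm_pos_iff.mp htpos
        have hPne : x (j+1) ≠ 0 := by
          intro h; rw [h] at hspos; simp at hspos
        have hdiff : ‖x (j+1) - (y j - β⁻¹ • z j)‖^2 - ‖u - (y j - β⁻¹ • z j)‖^2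
            = (x (j+1) i)^2 - 2*(x (j+1) i)*((y j - β⁻¹ • z j) i) := by
          rw [enorm_sq, enorm_sq]
          rw [← Finset.add_sum_erase Finset.univ
                (fun j' => (x (j+1) - (y j - β⁻¹ • z j)) j' ^ 2) (Finset.mem_univ i),
              ← Finset.add_sum_erase Finset.univ
                (fun j' => (u - (y j - β⁻¹ • z j)) j' ^ 2) (Finset.mem_univ i)]
          have he : ∑ j' ∈ Finset.univ.erase i, (u - (y j - β⁻¹ • z j)) j' ^ 2
              = ∑ j' ∈ Finset.univ.erase i, (x (j+1) - (y j - β⁻¹ • z j)) j' ^ 2 := by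
            apply Finset.sum_congr rfl
            intro j' hj'
            have e3 : (u - (y j - β⁻¹ • z j)) j' = u j' - (y j - β⁻¹ • z j) j' := rfl
            have e4 : (x (j+1) - (y j - β⁻¹ • z j)) j'
                = x (j+1) j' - (y j - β⁻¹ • z j) j' := rfl
            rw [e3, e4, huj j' (Finset.ne_of_mem_erase hj')]
          have e1 : (x (j+1) - (y j - β⁻¹ • z j)) i = x (j+1) i - (y j - β⁻¹ • z j) i := rfl
          have e2 : (u - (y j - β⁻¹ • z j)) i = u i - (y j - β⁻¹ • z j) i := rfl
          rw [he, e1, e2, hui]; ring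
        have hopt := (hADMM j).1.2 u huX
        simp only [ratio] at hopt
        rw [if_neg hPne, if_neg hune, hl1d, ← hc] at hopt
        have hdc : c * (‖x (j+1) - (y j - β⁻¹ • z j)‖^2 - ‖u - (y j - β⁻¹ • z j)‖^2)
            = c * ((x (j+1) i)^2 - 2*(x (j+1) i)*((y j - β⁻¹ • z j) i)) := by rw [hdiff]
        have hineq : (l1 u + x (j+1) i)/‖x (j+1)‖
            + c*((x (j+1) i)^2 - 2*(x (j+1) i)*((y j - β⁻¹ • z j) i)) ≤ l1 u/‖u‖ := by
          linarith [hopt, hdc]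
        have hkey := key_scalar (l1 u) (x (j+1) i) ‖u‖ ‖x (j+1)‖
          ((y j - β⁻¹ • z j) i) c (l1_nonneg u) hεpos htpos hspos hsq hcpos hineq
        have hDj : D j = l1 u * (x (j+1) i)/(2*‖x (j+1)‖*‖u‖^2)
            + 2*c*((y j - β⁻¹ • z j) i) - 1/‖x (j+1)‖ := by
          simp only [hD]
          have e1 : l1 (x (j+1)) - |x (j+1) i| = l1 u := by
            rw [hl1d, abs_of_pos hεpos]; ring
          have e2 : Real.sqrt (‖x (j+1)‖^2 - (x (j+1) i)^2) = ‖u‖ := by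
            rw [show ‖x (j+1)‖^2 - (x (j+1) i)^2 = ‖u‖^2 by linarith [hsq],
              Real.sqrt_sq (norm_nonneg u)]
          rw [e1, e2]
        rw [hDj]
        linarith [hkey]
      have hcontra := (hfreq.and_eventually (hgood.and hlt)).exists
      obtain ⟨j, hj1, hj2, hj3⟩ := hcontra
      exact absurd (hj2 hj1) (not_le.mpr hj3)
    · -- easy case
      have hci := coord_tendsto x xinf i hconv
      have h := hci.eventually_ne hi
      exact h.mono (fun k hk => by simp [hk, hi])
  have hall : ∀ᶠ k in atTop, ∀ i, (x k i ≠ 0 ↔ xinf i ≠ 0) := eventually_all.mpr main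
  obtain ⟨K, hK⟩ := (Filter.eventually_atTop).mp hall
  exact ⟨K, hK⟩
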